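/- Let R be a commutative ring, M an R-module, 𝔭 a prime ideal of R, and x ∈ M. The following are equivalent: (1) 𝔭 is minimal among the prime ideals containing the annihilator Ann_R(x); (2) the image x/1 of x in the localization M_𝔭 is nonzero, and every element of 𝔭·R_𝔭 is nilpotent for the cyclic R_𝔭-module R_𝔭·(x/1); (3) R_𝔭·(x/1) is a (𝔭·R_𝔭)-coprimary R_𝔭-module. -/

import Mathlib

section Defs

variable (A L : Type*) [CommRing A] [AddCommGroup L] [Module A L]

/-- `a ∈ A` is a zero divisor for the module `L`:
`a • y = 0` for some `y ≠ 0` in `L`. -/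
def IsZeroDivisorFor (a : A) : Prop := ∃ y : L, y ≠ 0 ∧ a • y = 0

/-- `a ∈ A` is nilpotent for the module `L`: for every `y ∈ L` there is `n`
with `a ^ n • y = 0`. -/
def IsNilpotentFor (a : A) : Prop := ∀ y : L, ∃ n : ℕ, a ^ n • y = 0

/-- `L` is `q`-coprimary: `L ≠ 0`, every zero divisor for `L` lies in `q`,
and every element of `q` is nilpotent for `L`. -/
def IsCoprimaryFor (q : Ideal A) : Prop :=
  (∃ y : L, y ≠ 0) ∧ (∀ a : A, IsZeroDivisorFor A L a → a ∈ q) ∧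
    ∀ a ∈ q, IsNilpotentFor A L a

/-- A submodule `N` of `L` is `q`-primary in `L` iff `L ⧸ N` is `q`-coprimary. -/
def IsPrimaryIn (N : Submodule A L) (q : Ideal A) : Prop :=
  IsCoprimaryFor A (L ⧸ N) q

/-- The `S`-component of `N` in `L`: `{x ∈ L | ∃ s ∈ S, s • x ∈ N}`,
for an arbitrary subset `S ⊆ A`. -/
def sComp (S : Set A) (N : Submodule A L) : Set L := {x : L | ∃ s ∈ S, s • x ∈ N}

/-- A prime ideal `p` is Krull-associated to `L` iff for every multiplicatively
closed subset `T ⊋ A ∖ p` one has `T^L((0)) ⊋ (A ∖ p)^L((0))`. -/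
def KrullAssociated (p : Ideal A) : Prop :=
  ∀ T : Submonoid A, ((p : Set A)ᶜ ⊂ (T : Set A)) →
    sComp A L ((p : Set A)ᶜ) ⊥ ⊂ sComp A L (T : Set A) ⊥

end Defs


lemma minimal_iff_aux {R : Type*} [CommRing R] (𝔭 : Ideal R) [𝔭.IsPrime] (I : Ideal R) :
    𝔭 ∈ I.minimalPrimes ↔ I ≤ 𝔭 ∧ ∀ a ∈ 𝔭, ∃ n : ℕ, ∃ s ∉ 𝔭, s * a ^ n ∈ I := by
  constructor
  · intro h
    refine ⟨h.1.2, fun a ha => ?_⟩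
    have hrad : algebraMap R (Localization.AtPrime 𝔭) a ∈
        (Ideal.map (algebraMap R (Localization.AtPrime 𝔭)) I).radical := by
      rw [Ideal.radical_eq_sInf, Ideal.mem_sInf]
      rintro q' ⟨hIq', hq'⟩
      have hq'le : q' ≤ IsLocalRing.maximalIdeal (Localization.AtPrime 𝔭) :=
        IsLocalRing.le_maximalIdeal hq'.ne_top
      have hcom : Ideal.comap (algebraMap R (Localization.AtPrime 𝔭)) q' ≤ 𝔭 := by
        have h2 := Ideal.comap_mono (f := algebraMap R (Localization.AtPrime 𝔭)) hq'le
        exact h2.trans (Localization.AtPrime.comap_maximalIdeal (I := 𝔭)).le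
      have hIc : I ≤ Ideal.comap (algebraMap R (Localization.AtPrime 𝔭)) q' :=
        le_trans Ideal.le_comap_map (Ideal.comap_mono hIq')
      exact h.2 ⟨hq'.comap _, hIc⟩ hcom ha
    rw [Ideal.mem_radical_iff] at hrad
    obtain ⟨n, hn⟩ := hrad
    rw [← map_pow, IsLocalization.mem_map_algebraMap_iff 𝔭.primeCompl] at hn
    obtain ⟨⟨⟨i, hi⟩, s⟩, hs⟩ := hn
    rw [← map_mul, IsLocalization.eq_iff_exists 𝔭.primeCompl] at hs
    obtain ⟨t, ht⟩ := hs
    refine ⟨n, t * s, fun hmem => ?_, ?_⟩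
    · rcases ‹𝔭.IsPrime›.mem_or_mem hmem with h1 | h1
      · exact t.2 h1
      · exact s.2 h1
    · have h2 : (t : R) * s * a ^ n = (t : R) * i := by rw [← ht]; ring
      rw [h2]
      exact I.mul_mem_left _ hi
  · rintro ⟨hle, h⟩
    refine ⟨⟨inferInstance, hle⟩, ?_⟩
    rintro q ⟨hq, hIq⟩ hq𝔭 a ha
    obtain ⟨n, s, hs, hsa⟩ := h a ha
    rcases hq.mem_or_mem (hIq hsa) with h1 | h1
    · exact absurd (hq𝔭 h1) hs
    · exact hq.mem_of_pow_mem _ h1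


/-- for a prime `𝔭` and `x ∈ M`, the following are equivalent:
(1) `𝔭` is minimal among the primes containing `Ann_R(x)`;
(2) `x/1 ≠ 0` in `M_𝔭` and every element of `𝔭·R_𝔭` is nilpotent for `R_𝔭·(x/1)`;
(3) `R_𝔭·(x/1)` is `𝔭·R_𝔭`-coprimary. -/
theorem statement10 {R M : Type*} [CommRing R] [AddCommGroup M] [Module R M]
    (𝔭 : Ideal R) [𝔭.IsPrime] (x : M) :
    ((𝔭 ∈ (Ideal.torsionOf R M x).minimalPrimes) ↔
      (LocalizedModule.mkLinearMap 𝔭.primeCompl M x ≠ 0 ∧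
        ∀ a ∈ Ideal.map (algebraMap R (Localization.AtPrime 𝔭)) 𝔭,
          IsNilpotentFor (Localization.AtPrime 𝔭)
            (Submodule.span (Localization.AtPrime 𝔭)
              {LocalizedModule.mkLinearMap 𝔭.primeCompl M x}) a)) ∧
    ((𝔭 ∈ (Ideal.torsionOf R M x).minimalPrimes) ↔
      IsCoprimaryFor (Localization.AtPrime 𝔭)
        (Submodule.span (Localization.AtPrime 𝔭)
          {LocalizedModule.mkLinearMap 𝔭.primeCompl M x})
        (Ideal.map (algebraMap R (Localization.AtPrime 𝔭)) 𝔭)) := by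
  classical
  set S := 𝔭.primeCompl with hS
  set R' := Localization.AtPrime 𝔭 with hR'
  set f := algebraMap R R' with hf
  set x' : LocalizedModule S M := LocalizedModule.mkLinearMap S M x with hx'def
  set N := Submodule.span R' {x'} with hN
  set 𝔮 := Ideal.map f 𝔭 with h𝔮
  have hx'mk : x' = LocalizedModule.mk x 1 := rfl
  have hmemx' : x' ∈ N := Submodule.mem_span_singleton_self x'
  -- generic: mk m 1 = 0 iff some s ∈ S kills m
  have hmkzero : ∀ m : M, (LocalizedModule.mk m (1 : S) = 0) ↔ ∃ s : S, (s : R) • m = 0 := by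
    intro m
    rw [show (0 : LocalizedModule S M) = LocalizedModule.mk 0 1 from
      (LocalizedModule.zero_mk 1).symm, LocalizedModule.mk_eq]
    constructor
    · rintro ⟨u, hu⟩
      refine ⟨u, ?_⟩
      simpa [Submonoid.smul_def] using hu
    · rintro ⟨s, hs⟩
      exact ⟨s, by simpa [Submonoid.smul_def] using hs⟩
  have h0 : x' ≠ 0 ↔ Ideal.torsionOf R M x ≤ 𝔭 := by
    rw [Ne, hx'mk, hmkzero]
    constructor
    · intro h r hr
      by_contra hr𝔭
      exact h ⟨⟨r, hr𝔭⟩, (Ideal.mem_torsionOf_iff x r).mp hr⟩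
    · rintro hle ⟨⟨s, hs⟩, h⟩
      exact hs (hle ((Ideal.mem_torsionOf_iff x s).mpr h))
  have hfpow : ∀ (a : R) (n : ℕ), (f a) ^ n • x' = LocalizedModule.mk (a ^ n • x) 1 := by
    intro a n
    rw [← map_pow, algebraMap_smul, hx'mk, LocalizedModule.smul'_mk]
  have hnil : ∀ a : R', IsNilpotentFor R' N a ↔ ∃ n : ℕ, a ^ n • x' = 0 := by
    intro a
    constructor
    · intro h
      obtain ⟨n, hn⟩ := h ⟨x', hmemx'⟩
      exact ⟨n, by simpa [Subtype.ext_iff] using hn⟩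
    · rintro ⟨n, hn⟩ ⟨y, hy⟩
      rw [hN, Submodule.mem_span_singleton] at hy
      obtain ⟨c, hc⟩ := hy
      refine ⟨n, ?_⟩
      rw [Subtype.ext_iff]
      show a ^ n • y = 0
      rw [← hc, smul_comm, hn, smul_zero]
  have h𝔮nil : (∀ a ∈ 𝔮, ∃ n : ℕ, a ^ n • x' = 0) ↔
      ∀ p ∈ 𝔭, ∃ n : ℕ, ∃ s ∉ 𝔭, (s * p ^ n) • x = 0 := by
    constructor
    · intro h p hp
      obtain ⟨n, hn⟩ := h (f p) (Ideal.mem_map_of_mem f hp)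
      rw [hfpow, hmkzero] at hn
      obtain ⟨s, hs⟩ := hn
      exact ⟨n, s, s.2, by rw [mul_smul]; exact hs⟩
    · intro h a ha
      rw [h𝔮, IsLocalization.mem_map_algebraMap_iff S R'] at ha
      obtain ⟨⟨⟨p, hp⟩, s⟩, hps⟩ := ha
      obtain ⟨n, t, ht, htp⟩ := h p hp
      have h1 : (f p) ^ n • x' = 0 := by
        rw [hfpow, hmkzero]
        exact ⟨⟨t, ht⟩, by rw [← mul_smul]; exact htp⟩
      have h3 : (f s) ^ n • (a ^ n • x') = 0 := by
        rw [smul_smul, ← mul_pow, mul_comm (f ↑s) a, hps]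
        exact h1
      have hu : IsUnit ((f (s : R)) ^ n) := (IsLocalization.map_units R' s).pow n
      obtain ⟨u, hu⟩ := hu
      rw [← hu] at h3
      refine ⟨n, ?_⟩
      have h4 : ((u⁻¹ : R'ˣ) : R') • ((u : R') • (a ^ n • x')) = 0 := by
        rw [h3, smul_zero]
      rwa [smul_smul, Units.inv_mul, one_smul] at h4
  have hexists : (∃ y : N, y ≠ 0) ↔ x' ≠ 0 := by
    constructor
    · rintro ⟨⟨y, hy⟩, hne⟩ hx0
      rw [hN, Submodule.mem_span_singleton] at hy
      obtain ⟨c, hc⟩ := hy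
      apply hne
      rw [Subtype.ext_iff]
      show y = 0
      rw [← hc, hx0, smul_zero]
    · intro h
      exact ⟨⟨x', hmemx'⟩, fun hc => h (by simpa [Subtype.ext_iff] using hc)⟩
  have hzd : ∀ a : R', IsZeroDivisorFor R' N a → a ∈ 𝔮 := by
    intro a ha
    by_contra h
    rw [h𝔮, Localization.AtPrime.map_eq_maximalIdeal] at h
    have hu : IsUnit a := by
      by_contra h'
      exact h h'
    obtain ⟨y, hy, hay⟩ := ha
    obtain ⟨u, rfl⟩ := hu
    apply hy
    have h4 : ((u⁻¹ : R'ˣ) : R') • ((u : R') • y) = 0 := by rw [hay, smul_zero]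
    rwa [smul_smul, Units.inv_mul, one_smul] at h4
  have part1 : (𝔭 ∈ (Ideal.torsionOf R M x).minimalPrimes) ↔
      (x' ≠ 0 ∧ ∀ a ∈ 𝔮, IsNilpotentFor R' N a) := by
    rw [minimal_iff_aux]
    constructor
    · rintro ⟨hle, h⟩
      refine ⟨h0.mpr hle, fun a ha => (hnil a).mpr (h𝔮nil.mpr (fun p hp => ?_) a ha)⟩
      obtain ⟨n, s, hs, hsa⟩ := h p hp
      exact ⟨n, s, hs, (Ideal.mem_torsionOf_iff x _).mp hsa⟩
    · rintro ⟨hne, h⟩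
      refine ⟨h0.mp hne, fun p hp => ?_⟩
      obtain ⟨n, s, hs, hsa⟩ := h𝔮nil.mp (fun a ha => (hnil a).mp (h a ha)) p hp
      exact ⟨n, s, hs, (Ideal.mem_torsionOf_iff x _).mpr hsa⟩
  refine ⟨part1, part1.trans ?_⟩
  constructor
  · rintro ⟨hne, h⟩
    exact ⟨hexists.mpr hne, hzd, h⟩
  · rintro ⟨he, _, h⟩
    exact ⟨hexists.mp he, h⟩
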